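/- The centralizer of G₆ in Aff(3) is trivial: if (v,A) ∈ Aff(3) commutes with every element of G₆, then A = I and v = 0. -/

import Mathlib

/-! `Aff(3) = ℝ³ ⋊ GL(3,ℝ)`, realized as the group of affine self-equivalences of `ℝ³`
(with multiplication given by composition, so that `(v,A)(w,B) = (v + Aw, AB)`). -/

abbrev V3 : Type := Fin 3 → ℝ
abbrev Aff3 : Type := V3 ≃ᵃ[ℝ] V3

/-- The linear self-equivalence of `ℝ³` given by a diagonal matrix with entries `±1`. -/
noncomputable def diagLin (d : Fin 3 → ℝ) (hd : ∀ i, d i * d i = 1) : V3 ≃ₗ[ℝ] V3 where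
  toFun v := fun i => d i * v i
  invFun v := fun i => d i * v i
  map_add' u v := by funext i; simp [mul_add]
  map_smul' c v := by funext i; simp [smul_eq_mul]; ring
  left_inv v := by funext i; simp [← mul_assoc, hd i]
  right_inv v := by funext i; simp [← mul_assoc, hd i]

lemma sq_one_X : ∀ i, (![(1:ℝ),-1,-1]) i * (![(1:ℝ),-1,-1]) i = 1 := by
  intro i; fin_cases i <;> norm_num

lemma sq_one_Y : ∀ i, (![(-1:ℝ),1,-1]) i * (![(-1:ℝ),1,-1]) i = 1 := by
  intro i; fin_cases i <;> norm_num

/-- The affine transformation `x = (½e₁, X)`, acting by `w ↦ Xw + ½e₁`,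
where `X = diag[1,−1,−1]`. -/
noncomputable def affx : Aff3 :=
  ((diagLin ![1,-1,-1] sq_one_X).toAffineEquiv).trans
    (AffineEquiv.constVAdd ℝ V3 ![1/2, 0, 0])

/-- The affine transformation `y = (½(e₂−e₃), Y)`, acting by `w ↦ Yw + ½(e₂−e₃)`,
where `Y = diag[−1,1,−1]`. -/
noncomputable def affy : Aff3 :=
  ((diagLin ![-1,1,-1] sq_one_Y).toAffineEquiv).trans
    (AffineEquiv.constVAdd ℝ V3 ![0, 1/2, -1/2])

/-- `z = xy = (½(e₁−e₂+e₃), Z)`. -/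
noncomputable def affz : Aff3 := affx * affy

/-- The Hantzsche–Wendt group `G₆`, the subgroup of `Aff(3)` generated by `x` and `y`. -/
noncomputable def G6 : Subgroup Aff3 := Subgroup.closure {affx, affy}

/-- The translation subgroup `T = G₆ ∩ (ℝ³ × {I})`: the elements of `G₆`
whose linear part is the identity. -/
noncomputable def TT : Subgroup Aff3 :=
  G6 ⊓ (AffineEquiv.linearHom : Aff3 →* (V3 ≃ₗ[ℝ] V3)).ker

lemma affx_mem : affx ∈ G6 := Subgroup.subset_closure (by simp)
lemma affy_mem : affy ∈ G6 := Subgroup.subset_closure (by simp)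

/-- `x` as an element of `G₆`. -/
noncomputable def xg : G6 := ⟨affx, affx_mem⟩
/-- `y` as an element of `G₆`. -/
noncomputable def yg : G6 := ⟨affy, affy_mem⟩
/-- `z = xy` as an element of `G₆`. -/
noncomputable def zg : G6 := xg * yg

attribute [local simp] Matrix.cons_val_two

set_option maxHeartbeats 2000000 in
/-- The centralizer of `G₆` in `Aff(3)` is trivial: if an element of
`Aff(3)` commutes with every element of `G₆`, then it is the identity
(its linear part is `I` and its translation part is `0`). -/
theorem statement1 : Subgroup.centralizer (G6 : Set Aff3) = ⊥ := by
  rw [eq_bot_iff]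
  intro g hg
  have hx := hg affx affx_mem
  have hy := hg affy affy_mem
  set v : V3 := g 0 with hv
  set a0 : V3 := g.linear (Pi.single 0 1) with ha0d
  set a1 : V3 := g.linear (Pi.single 1 1) with ha1d
  set a2 : V3 := g.linear (Pi.single 2 1) with ha2d
  have hdec : ∀ (w : V3) (i : Fin 3), g w i = g.linear w i + v i := by
    intro w i
    have := congrFun (AffineMap.decomp (g : V3 →ᵃ[ℝ] V3)) w
    rw [hv]
    simpa using congrFun this i
  have hA : ∀ (w : V3) (i : Fin 3), g.linear w i = w 0 * a0 i + w 1 * a1 i + w 2 * a2 i := by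
    intro w i
    have hw : w = w 0 • (Pi.single 0 1 : V3) + w 1 • (Pi.single 1 1 : V3) + w 2 • (Pi.single 2 1 : V3) := by
      funext k; fin_cases k <;> simp
    conv_lhs => rw [hw]
    simp [map_add, map_smul, ha0d, ha1d, ha2d]
  have haffx' : ∀ w : V3, affx w = fun k => ![1/2,0,0] k + ![(1:ℝ),-1,-1] k * w k := by
    intro w; funext k; simp [affx, diagLin]
  have haffy' : ∀ w : V3, affy w = fun k => ![0,1/2,-1/2] k + ![(-1:ℝ),1,-1] k * w k := by
    intro w; funext k; simp [affy, diagLin]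
  have hEx : ∀ (w : V3) (i : Fin 3),
      ![1/2,0,0] i + ![(1:ℝ),-1,-1] i * (w 0 * a0 i + w 1 * a1 i + w 2 * a2 i + v i)
        = (![1/2,0,0] 0 + ![(1:ℝ),-1,-1] 0 * w 0) * a0 i
          + (![1/2,0,0] 1 + ![(1:ℝ),-1,-1] 1 * w 1) * a1 i
          + (![1/2,0,0] 2 + ![(1:ℝ),-1,-1] 2 * w 2) * a2 i + v i := by
    intro w i
    have h := congrFun (congrFun (congrArg (fun (e : Aff3) => (e : V3 → V3)) hx) w) i
    simp only [AffineEquiv.coe_mul, Function.comp_apply] at h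
    rw [haffx' (g w), haffx' w] at h
    simp only [hdec, hA] at h
    exact h
  have hEy : ∀ (w : V3) (i : Fin 3),
      ![0,1/2,-1/2] i + ![(-1:ℝ),1,-1] i * (w 0 * a0 i + w 1 * a1 i + w 2 * a2 i + v i)
        = (![0,1/2,-1/2] 0 + ![(-1:ℝ),1,-1] 0 * w 0) * a0 i
          + (![0,1/2,-1/2] 1 + ![(-1:ℝ),1,-1] 1 * w 1) * a1 i
          + (![0,1/2,-1/2] 2 + ![(-1:ℝ),1,-1] 2 * w 2) * a2 i + v i := by
    intro w i
    have h := congrFun (congrFun (congrArg (fun (e : Aff3) => (e : V3 → V3)) hy) w) i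
    simp only [AffineEquiv.coe_mul, Function.comp_apply] at h
    rw [haffy' (g w), haffy' w] at h
    simp only [hdec, hA] at h
    exact h
  have exz0 := hEx (0:V3) 0
  norm_num [Pi.single_apply, Fin.ext_iff] at exz0
  have exz1 := hEx (0:V3) 1
  norm_num [Pi.single_apply, Fin.ext_iff] at exz1
  have exz2 := hEx (0:V3) 2
  norm_num [Pi.single_apply, Fin.ext_iff] at exz2
  have ex00 := hEx (Pi.single 0 1 : V3) 0
  norm_num [Pi.single_apply, Fin.ext_iff] at ex00
  have ex01 := hEx (Pi.single 0 1 : V3) 1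
  norm_num [Pi.single_apply, Fin.ext_iff] at ex01
  have ex02 := hEx (Pi.single 0 1 : V3) 2
  norm_num [Pi.single_apply, Fin.ext_iff] at ex02
  have ex10 := hEx (Pi.single 1 1 : V3) 0
  norm_num [Pi.single_apply, Fin.ext_iff] at ex10
  have ex11 := hEx (Pi.single 1 1 : V3) 1
  norm_num [Pi.single_apply, Fin.ext_iff] at ex11
  have ex12 := hEx (Pi.single 1 1 : V3) 2
  norm_num [Pi.single_apply, Fin.ext_iff] at ex12
  have ex20 := hEx (Pi.single 2 1 : V3) 0
  norm_num [Pi.single_apply, Fin.ext_iff] at ex20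
  have ex21 := hEx (Pi.single 2 1 : V3) 1
  norm_num [Pi.single_apply, Fin.ext_iff] at ex21
  have ex22 := hEx (Pi.single 2 1 : V3) 2
  norm_num [Pi.single_apply, Fin.ext_iff] at ex22
  have eyz0 := hEy (0:V3) 0
  norm_num [Pi.single_apply, Fin.ext_iff] at eyz0
  have eyz1 := hEy (0:V3) 1
  norm_num [Pi.single_apply, Fin.ext_iff] at eyz1
  have eyz2 := hEy (0:V3) 2
  norm_num [Pi.single_apply, Fin.ext_iff] at eyz2
  have ey00 := hEy (Pi.single 0 1 : V3) 0
  norm_num [Pi.single_apply, Fin.ext_iff] at ey00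
  have ey01 := hEy (Pi.single 0 1 : V3) 1
  norm_num [Pi.single_apply, Fin.ext_iff] at ey01
  have ey02 := hEy (Pi.single 0 1 : V3) 2
  norm_num [Pi.single_apply, Fin.ext_iff] at ey02
  have ey10 := hEy (Pi.single 1 1 : V3) 0
  norm_num [Pi.single_apply, Fin.ext_iff] at ey10
  have ey11 := hEy (Pi.single 1 1 : V3) 1
  norm_num [Pi.single_apply, Fin.ext_iff] at ey11
  have ey12 := hEy (Pi.single 1 1 : V3) 2
  norm_num [Pi.single_apply, Fin.ext_iff] at ey12
  have ey20 := hEy (Pi.single 2 1 : V3) 0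
  norm_num [Pi.single_apply, Fin.ext_iff] at ey20
  have ey21 := hEy (Pi.single 2 1 : V3) 1
  norm_num [Pi.single_apply, Fin.ext_iff] at ey21
  have ey22 := hEy (Pi.single 2 1 : V3) 2
  norm_num [Pi.single_apply, Fin.ext_iff] at ey22
  have ha00 : a0 0 = 1 := by linarith [exz0]
  have ha01 : a0 1 = 0 := by linarith [exz1, ex01]
  have ha02 : a0 2 = 0 := by linarith [exz2, ex02]
  have ha10 : a1 0 = 0 := by linarith [exz0, ex10]
  have ha20 : a2 0 = 0 := by linarith [exz0, ex20]
  have hv0 : v 0 = 0 := by linarith [eyz0, ha10, ha20]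
  have hv1 : v 1 = 0 := by linarith [exz1, ha01]
  have hv2 : v 2 = 0 := by linarith [exz2, ha02]
  have ha12 : a1 2 = 0 := by linarith [eyz2, ey12]
  have ha21 : a2 1 = 0 := by linarith [eyz1, ey21]
  have ha11 : a1 1 = 1 := by linarith [eyz1, ha21]
  have ha22 : a2 2 = 1 := by linarith [eyz2, ha12, hv2]
  have hg1 : g = 1 := by
    apply AffineEquiv.ext
    intro w
    funext i
    rw [hdec w i, hA w i]
    fin_cases i <;> simp [ha00, ha01, ha02, ha10, ha11, ha12, ha20, ha21, ha22, hv0, hv1, hv2]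
  simp [Subgroup.mem_bot, hg1]
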